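/- In the Friedrichs model, define Ã* on D(A*) by (Ã* g)(x) = x g(x) − c_g + (∫_ℝ g φ̄)·ψ(x), and let Ã be the operator on D(A) given by (Ã f)(x) = x f(x) + (∫_ℝ f ψ̄)·φ(x). Then: (i) the restriction of Ã* to {u ∈ D(A*) : Γ₁ u = 0 and Γ₂ u = 0} coincides with A (equal domains and equal action), and the restriction of A* to the same set coincides with Ã; (ii) for all f, g ∈ D(A*): ⟨A* f, g⟩ − ⟨f, Ã* g⟩ = Γ₁ f · conj(Γ₂ g) − Γ₂ f · conj(Γ₁ g). -/

import Mathlib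

open MeasureTheory Filter Topology
open scoped InnerProductSpace

noncomputable section

/-- The space `L²(ℝ)` (complex valued). -/
abbrev L2 := Lp ℂ 2 (volume : Measure ℝ)

/-- Membership in the domain of the minimal Friedrichs-model operator `A`:
`x f(x) ∈ L²` and `lim_{R→∞} ∫_{-R}^R f = 0`. -/
abbrev inDomA (f : L2) : Prop :=
  MemLp (fun x : ℝ => (x : ℂ) * f x) 2 volume ∧
    Tendsto (fun R : ℝ => ∫ x in Set.Ioc (-R) R, f x) atTop (nhds 0)

/-- Membership in the domain of the maximal operator(s): there is a constant `c`
(the trace `Γ₂ f = c_f`) with `x f(x) − c ∈ L²`. -/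
abbrev inDomAstar (f : L2) (c : ℂ) : Prop :=
  MemLp (fun x : ℝ => (x : ℂ) * f x - c) 2 volume

/-- The minimal operator `A`: `(A f)(x) = x f(x) + ⟨f, φ⟩ ψ(x)`
(paper inner product `⟨f, φ⟩ = ⟪φ, f⟫` in Mathlib's convention). -/
def Aop (φ ψ f : L2) (hf : inDomA f) : L2 :=
  MemLp.toLp (fun x : ℝ => (x : ℂ) * f x) hf.1 + ⟪φ, f⟫_ℂ • ψ

/-- The adjoint expression `A*`: `(A* f)(x) = x f(x) − c_f + ⟨f, ψ⟩ φ(x)`. -/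
def AstarOp (φ ψ f : L2) (c : ℂ) (h : inDomAstar f c) : L2 :=
  MemLp.toLp (fun x : ℝ => (x : ℂ) * f x - c) h + ⟪ψ, f⟫_ℂ • φ

/-- The expression `Ã*`: `(Ã* f)(x) = x f(x) − c_f + ⟨f, φ⟩ ψ(x)`. -/
def AtildeStarOp (φ ψ f : L2) (c : ℂ) (h : inDomAstar f c) : L2 :=
  MemLp.toLp (fun x : ℝ => (x : ℂ) * f x - c) h + ⟪φ, f⟫_ℂ • ψ

/-- The operator `Ã`: `(Ã f)(x) = x f(x) + ⟨f, ψ⟩ φ(x)` on `D(A)`. -/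
def AtildeOp (φ ψ f : L2) (hf : inDomA f) : L2 :=
  MemLp.toLp (fun x : ℝ => (x : ℂ) * f x) hf.1 + ⟪ψ, f⟫_ℂ • φ


-- inv squared norm integrable on Ioi 1
lemma invsq_Ioi : IntegrableOn (fun x : ℝ => ‖((x:ℝ):ℂ)⁻¹‖ ^ 2) (Set.Ioi 1) volume := by
  refine (integrableOn_Ioi_rpow_of_lt (by norm_num : (-2:ℝ) < -1) one_pos).congr_fun
    (fun x hx => ?_) measurableSet_Ioi
  have hx1 : (1:ℝ) < x := hx
  have hx0 : (0:ℝ) < x := lt_trans one_pos hx1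
  dsimp only
  rw [Real.rpow_neg hx0.le, show ((2:ℝ)) = ((2:ℕ):ℝ) by norm_num, Real.rpow_natCast]
  simp [norm_inv, Complex.norm_real, abs_of_pos hx0, inv_pow]

lemma invsq_Iio : IntegrableOn (fun x : ℝ => ‖((x:ℝ):ℂ)⁻¹‖ ^ 2) (Set.Iio (-1)) volume := by
  have m : MeasurableEmbedding fun x : ℝ => -x :=
    (Homeomorph.neg ℝ).isClosedEmbedding.measurableEmbedding
  have : IntegrableOn (fun x : ℝ => ‖((x:ℝ):ℂ)⁻¹‖ ^ 2) (Set.Iio (-1)) (Measure.map Neg.neg volume) := by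
    rw [m.integrableOn_map_iff]
    have : (Neg.neg ⁻¹' Set.Iio (-1 : ℝ)) = Set.Ioi 1 := by
      ext x
      simp only [Set.mem_preimage, Set.mem_Iio, Set.mem_Ioi]
      constructor <;> intro h <;> linarith
    rw [this]
    refine invsq_Ioi.congr_fun (fun x hx => ?_) measurableSet_Ioi
    simp [Function.comp]
  rwa [Measure.map_neg_eq_self (volume : Measure ℝ)] at this

lemma memLp_inv (S : Set ℝ) (hS : IntegrableOn (fun x : ℝ => ‖((x:ℝ):ℂ)⁻¹‖ ^ 2) S volume) :
    MemLp (fun x : ℝ => ((x:ℝ):ℂ)⁻¹) 2 (volume.restrict S) := by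
  refine (memLp_two_iff_integrable_sq_norm ?_).mpr hS
  exact (Complex.measurable_ofReal.inv).aestronglyMeasurable

lemma holder_int {H : ℝ → ℂ} (h : MemLp H 2 volume) {S : Set ℝ}
    (hinv : MemLp (fun x : ℝ => ((x:ℝ):ℂ)⁻¹) 2 (volume.restrict S)) :
    IntegrableOn (fun x => H x * ((x:ℝ):ℂ)⁻¹) S volume := by
  have := MemLp.smul (p := 2) (q := 2) (r := 1) (h.restrict S) hinv (hpqr := ⟨by rw [ENNReal.inv_two_add_inv_two, inv_one]⟩)
  have h1 : Integrable (fun x : ℝ => ((x:ℝ):ℂ)⁻¹ • H x) (volume.restrict S) :=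
    memLp_one_iff_integrable.mp this
  exact h1.congr (Eventually.of_forall fun x => by simp [smul_eq_mul, mul_comm])

lemma memLp_integrableOn_finite {f : ℝ → ℂ} (hf : MemLp f 2 volume) {s : Set ℝ}
    (hs : volume s < ⊤) : IntegrableOn f s volume := by
  haveI : Fact (volume s < ⊤) := ⟨hs⟩
  exact (hf.restrict s).integrable one_le_two

lemma gamma1_exists {f : ℝ → ℂ} (hf2 : MemLp f 2 volume) {c : ℂ}
    (h : MemLp (fun x : ℝ => (x:ℂ) * f x - c) 2 volume) :
    ∃ L : ℂ, Tendsto (fun R : ℝ => ∫ x in Set.Ioc (-R) R, f x) atTop (𝓝 L) := by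
  set H : ℝ → ℂ := fun x => (x:ℂ) * f x - c with hH
  set w : ℝ → ℂ := fun x => if |x| ≤ 1 then f x else H x * (x:ℂ)⁻¹ with hw
  -- integrability of w
  have hwIcc : IntegrableOn w (Set.Icc (-1) 1) volume := by
    refine (memLp_integrableOn_finite hf2 (by simp)).congr_fun (fun x hx => ?_) measurableSet_Icc
    have : |x| ≤ 1 := abs_le.mpr ⟨hx.1, hx.2⟩
    simp [hw, this]
  have hwIoi : IntegrableOn w (Set.Ioi 1) volume := by
    refine (holder_int h (memLp_inv _ invsq_Ioi)).congr_fun (fun x hx => ?_) measurableSet_Ioi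
    have : ¬ |x| ≤ 1 := by
      have : (1:ℝ) < x := hx
      rw [not_le, abs]; exact lt_sup_iff.mpr (Or.inl this)
    simp [hw, this]
  have hwIio : IntegrableOn w (Set.Iio (-1)) volume := by
    refine (holder_int h (memLp_inv _ invsq_Iio)).congr_fun (fun x hx => ?_) measurableSet_Iio
    have : ¬ |x| ≤ 1 := by
      have hx' : x < -1 := hx
      rw [not_le, abs]; exact lt_sup_iff.mpr (Or.inr (by linarith))
    simp [hw, this]
  have hwint : Integrable w volume := by
    have huniv : (Set.univ : Set ℝ) = Set.Icc (-1) 1 ∪ (Set.Iio (-1) ∪ Set.Ioi 1) := by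
      ext x
      simp only [Set.mem_univ, Set.mem_union, Set.mem_Icc, Set.mem_Iio, Set.mem_Ioi, true_iff]
      rcases lt_trichotomy x (-1) with hx|hx|hx
      · exact Or.inr (Or.inl hx)
      · exact Or.inl ⟨le_of_eq hx.symm, by linarith⟩
      · rcases le_or_gt x 1 with h2|h2
        · exact Or.inl ⟨hx.le, h2⟩
        · exact Or.inr (Or.inr h2)
    rw [← integrableOn_univ, huniv]
    exact hwIcc.union (hwIio.union hwIoi)
  -- interval integrability facts
  have hfI : ∀ a b : ℝ, IntervalIntegrable f volume a b := fun a b => by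
    rw [intervalIntegrable_iff]
    exact memLp_integrableOn_finite hf2 measure_Ioc_lt_top
  have hwI : ∀ a b : ℝ, IntervalIntegrable w volume a b := fun a b =>
    hwint.intervalIntegrable
  -- the truncated integrals agree for R ≥ 1
  have key : ∀ R : ℝ, 1 ≤ R →
      (∫ x in Set.Ioc (-R) R, f x) = ∫ x in Set.Ioc (-R) R, w x := by
    intro R hR
    have h1R : (-R : ℝ) ≤ -1 := by linarith
    have h2R : (-1 : ℝ) ≤ 1 := by norm_num
    have h3R : (1 : ℝ) ≤ R := hR
    have hRR : (-R : ℝ) ≤ R := by linarith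
    rw [← intervalIntegral.integral_of_le hRR, ← intervalIntegral.integral_of_le hRR]
    have splitf : (∫ x in (-R)..R, f x) =
        (∫ x in (-R)..(-1:ℝ), f x) + (∫ x in (-1:ℝ)..(1:ℝ), f x) + ∫ x in (1:ℝ)..R, f x := by
      rw [intervalIntegral.integral_add_adjacent_intervals (hfI _ _) (hfI _ _),
        intervalIntegral.integral_add_adjacent_intervals (hfI _ _) (hfI _ _)]
    have splitw : (∫ x in (-R)..R, w x) =
        (∫ x in (-R)..(-1:ℝ), w x) + (∫ x in (-1:ℝ)..(1:ℝ), w x) + ∫ x in (1:ℝ)..R, w x := by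
      rw [intervalIntegral.integral_add_adjacent_intervals (hwI _ _) (hwI _ _),
        intervalIntegral.integral_add_adjacent_intervals (hwI _ _) (hwI _ _)]
    -- middle
    have hmid : (∫ x in (-1:ℝ)..(1:ℝ), f x) = ∫ x in (-1:ℝ)..(1:ℝ), w x := by
      refine intervalIntegral.integral_congr (fun x hx => ?_)
      rw [Set.uIcc_of_le h2R] at hx
      have : |x| ≤ 1 := abs_le.mpr ⟨hx.1, hx.2⟩
      simp [hw, this]
    -- right piece
    have hinvI : ∀ a b : ℝ, (0:ℝ) ∉ Set.uIcc a b →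
        IntervalIntegrable (fun x : ℝ => c * (x:ℂ)⁻¹) volume a b := by
      intro a b hab
      apply ContinuousOn.intervalIntegrable
      refine (continuousOn_const.mul ?_)
      refine ContinuousOn.inv₀ (Complex.continuous_ofReal.continuousOn) ?_
      intro x hx
      have : x ≠ 0 := fun h0 => hab (h0 ▸ hx)
      simpa using this
    have h0R : (0:ℝ) ∉ Set.uIcc (1:ℝ) R := by
      rw [Set.uIcc_of_le h3R]; rintro ⟨h01, -⟩; linarith
    have h0L : (0:ℝ) ∉ Set.uIcc (-R:ℝ) (-1:ℝ) := by
      rw [Set.uIcc_of_le h1R]; rintro ⟨-, h01⟩; linarith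
    have hright : (∫ x in (1:ℝ)..R, f x)
        = (∫ x in (1:ℝ)..R, w x) + c * Real.log R := by
      have : (∫ x in (1:ℝ)..R, f x) = ∫ x in (1:ℝ)..R, (w x + c * (x:ℂ)⁻¹) := by
        refine intervalIntegral.integral_congr_ae (Eventually.of_forall fun x hx => ?_)
        rw [Set.uIoc_of_le h3R] at hx
        have hx1 : (1:ℝ) < x := hx.1
        have hxne : (x:ℂ) ≠ 0 := by
          simpa using (by linarith : x ≠ 0)
        have hnabs : ¬ |x| ≤ 1 := by rw [not_le, abs]; exact lt_sup_iff.mpr (Or.inl hx1)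
        simp only [hw, hH, hnabs, if_false]
        field_simp
        ring
      rw [this, intervalIntegral.integral_add (hwI _ _) (hinvI _ _ h0R),
        intervalIntegral.integral_const_mul]
      congr 1
      have : (∫ x in (1:ℝ)..R, ((x:ℝ):ℂ)⁻¹) = ∫ x in (1:ℝ)..R, (((x⁻¹ : ℝ)):ℂ) := by
        refine intervalIntegral.integral_congr (fun x hx => by push_cast; ring_nf)
      rw [this, intervalIntegral.integral_ofReal, integral_inv h0R]
      norm_num
    have hleft : (∫ x in (-R:ℝ)..(-1:ℝ), f x)
        = (∫ x in (-R:ℝ)..(-1:ℝ), w x) - c * Real.log R := by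
      have hne : (fun x : ℝ => f x) =ᵐ[volume] (fun x : ℝ => f x) := EventuallyEq.rfl
      have hm1 : ∀ᵐ x : ℝ, x ≠ -1 := by
        have : (volume : Measure ℝ) {(-1 : ℝ)} = 0 := measure_singleton _
        exact (measure_eq_zero_iff_ae_notMem.mp this).mono (by intro x hx; simpa using hx)
      have : (∫ x in (-R:ℝ)..(-1:ℝ), f x) = ∫ x in (-R:ℝ)..(-1:ℝ), (w x + c * (x:ℂ)⁻¹) := by
        refine intervalIntegral.integral_congr_ae ?_
        filter_upwards [hm1] with x hxne hx
        rw [Set.uIoc_of_le h1R] at hx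
        have hx1 : x < -1 := lt_of_le_of_ne hx.2 hxne
        have hxne0 : (x:ℂ) ≠ 0 := by
          simpa using (by linarith : x ≠ 0)
        have hnabs : ¬ |x| ≤ 1 := by
          rw [not_le, abs]; exact lt_sup_iff.mpr (Or.inr (by linarith))
        simp only [hw, hH, hnabs, if_false]
        field_simp
        ring
      rw [this, intervalIntegral.integral_add (hwI _ _) (hinvI _ _ h0L),
        intervalIntegral.integral_const_mul]
      have : (∫ x in (-R:ℝ)..(-1:ℝ), ((x:ℝ):ℂ)⁻¹) = ∫ x in (-R:ℝ)..(-1:ℝ), (((x⁻¹ : ℝ)):ℂ) := by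
        refine intervalIntegral.integral_congr (fun x hx => by push_cast; ring_nf)
      rw [this, intervalIntegral.integral_ofReal, integral_inv h0L]
      have hR0 : (0:ℝ) < R := by linarith
      have : (-1 : ℝ) / -R = R⁻¹ := by field_simp
      rw [this, Real.log_inv]
      push_cast
      ring
    rw [splitf, splitw, hmid, hright, hleft]
    ring
  -- conclude
  refine ⟨∫ x, w x, ?_⟩
  have hT : Tendsto (fun R : ℝ => ∫ x in Set.Ioc (-R) R, w x) atTop (𝓝 (∫ x, w x)) := by
    have := intervalIntegral_tendsto_integral hwint tendsto_neg_atTop_atBot tendsto_id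
    refine this.congr' ?_
    filter_upwards [eventually_ge_atTop (0:ℝ)] with R hR
    simp only [id_eq]
    rw [intervalIntegral.integral_of_le (by linarith : (-R:ℝ) ≤ R)]
  refine hT.congr' ?_
  filter_upwards [eventually_ge_atTop (1:ℝ)] with R hR
  exact (key R hR).symm

lemma sub_zero_fun_eq (f : L2) :
    (fun x : ℝ => (x : ℂ) * f x - 0) = (fun x : ℝ => (x : ℂ) * f x) :=
  funext fun x => sub_zero _

lemma green_identity (φ ψ f g : L2) (cf cg : ℂ) (hf : inDomAstar f cf) (hg : inDomAstar g cg)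
    (Γ1f Γ1g : ℂ)
    (hFt : Tendsto (fun R : ℝ => ∫ x in Set.Ioc (-R) R, f x) atTop (𝓝 Γ1f))
    (hGt : Tendsto (fun R : ℝ => ∫ x in Set.Ioc (-R) R, g x) atTop (𝓝 Γ1g)) :
    ⟪g, AstarOp φ ψ f cf hf⟫_ℂ - ⟪AtildeStarOp φ ψ g cg hg, f⟫_ℂ
      = Γ1f * (starRingEnd ℂ) cg - cf * (starRingEnd ℂ) Γ1g := by
  set F : L2 := MemLp.toLp (fun x : ℝ => (x : ℂ) * f x - cf) hf with hFdef
  set G : L2 := MemLp.toLp (fun x : ℝ => (x : ℂ) * g x - cg) hg with hGdef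
  have hred : ⟪g, AstarOp φ ψ f cf hf⟫_ℂ - ⟪AtildeStarOp φ ψ g cg hg, f⟫_ℂ
      = ⟪g, F⟫_ℂ - ⟪G, f⟫_ℂ := by
    rw [AstarOp, AtildeStarOp, inner_add_right, inner_add_left, inner_smul_right,
      inner_smul_left, inner_conj_symm]
    ring
  have hinner : ⟪g, F⟫_ℂ - ⟪G, f⟫_ℂ
      = ∫ x : ℝ, (⟪(g : ℝ → ℂ) x, (F : ℝ → ℂ) x⟫_ℂ - ⟪(G : ℝ → ℂ) x, (f : ℝ → ℂ) x⟫_ℂ) := by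
    rw [L2.inner_def, L2.inner_def,
      integral_sub (L2.integrable_inner g F) (L2.integrable_inner G f)]
  set u : ℝ → ℂ := fun x => (starRingEnd ℂ) cg * f x - cf * (starRingEnd ℂ) (g x) with hu
  have huae : (fun x : ℝ => ⟪(g : ℝ → ℂ) x, (F : ℝ → ℂ) x⟫_ℂ - ⟪(G : ℝ → ℂ) x, (f : ℝ → ℂ) x⟫_ℂ)
      =ᵐ[volume] u := by
    filter_upwards [MemLp.coeFn_toLp hf, MemLp.coeFn_toLp hg] with x hFx hGx
    rw [← hFdef] at hFx
    rw [← hGdef] at hGx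
    simp only [RCLike.inner_apply, hFx, hGx, hu, map_sub, map_mul, Complex.conj_ofReal]
    ring
  have hu_int : Integrable u volume :=
    (((L2.integrable_inner g F).sub (L2.integrable_inner G f)).congr huae)
  have hieq : ⟪g, F⟫_ℂ - ⟪G, f⟫_ℂ = ∫ x : ℝ, u x := by
    rw [hinner]; exact integral_congr_ae huae
  have htrunc : ∀ R : ℝ, (∫ x in Set.Ioc (-R) R, u x)
      = (starRingEnd ℂ) cg * (∫ x in Set.Ioc (-R) R, f x)
        - cf * (starRingEnd ℂ) (∫ x in Set.Ioc (-R) R, g x) := by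
    intro R
    have hfin : IntegrableOn (⇑f) (Set.Ioc (-R) R) volume :=
      memLp_integrableOn_finite (Lp.memLp f) measure_Ioc_lt_top
    have hgin : IntegrableOn (⇑g) (Set.Ioc (-R) R) volume :=
      memLp_integrableOn_finite (Lp.memLp g) measure_Ioc_lt_top
    have hgin' : IntegrableOn (fun x => (starRingEnd ℂ) (g x)) (Set.Ioc (-R) R) volume := by
      have := (LinearIsometryEquiv.integrable_comp_iff
        (Complex.conjLIE : ℂ ≃ₗᵢ[ℝ] ℂ)).mpr hgin
      exact this.congr (Eventually.of_forall fun x => by simp [Complex.conjLIE_apply])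
    rw [hu]
    rw [integral_sub (hfin.const_mul _) (hgin'.const_mul _), integral_const_mul,
      integral_const_mul, integral_conj]
  have hT1 : Tendsto (fun R : ℝ => ∫ x in Set.Ioc (-R) R, u x) atTop (𝓝 (∫ x, u x)) := by
    have := intervalIntegral_tendsto_integral hu_int tendsto_neg_atTop_atBot tendsto_id
    refine this.congr' ?_
    filter_upwards [eventually_ge_atTop (0:ℝ)] with R hR
    simp only [id_eq]
    rw [intervalIntegral.integral_of_le (by linarith : (-R:ℝ) ≤ R)]
  have hT2 : Tendsto (fun R : ℝ => ∫ x in Set.Ioc (-R) R, u x) atTop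
      (𝓝 ((starRingEnd ℂ) cg * Γ1f - cf * (starRingEnd ℂ) Γ1g)) := by
    simp only [htrunc]
    exact (tendsto_const_nhds.mul hFt).sub
      (tendsto_const_nhds.mul ((Complex.continuous_conj.tendsto _).comp hGt))
  have hval : (∫ x, u x) = (starRingEnd ℂ) cg * Γ1f - cf * (starRingEnd ℂ) Γ1g :=
    tendsto_nhds_unique hT1 hT2
  rw [hred, hieq, hval]
  ring

/-- (i) The restriction of `Ã*` to
`{u ∈ D(A*) : Γ₁u = 0, Γ₂u = 0}` coincides with `A` (equal domains and action), and the
restriction of `A*` to the same set coincides with `Ã`; (ii) the modified Green identity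
`⟨A*f, g⟩ − ⟨f, Ã*g⟩ = Γ₁f·conj(Γ₂g) − Γ₂f·conj(Γ₁g)` holds on `D(A*)`. -/
theorem statement_17 (φ ψ : L2) :
    (∀ f : L2,
      (inDomAstar f 0 ∧
          Tendsto (fun R : ℝ => ∫ x in Set.Ioc (-R) R, f x) atTop (nhds 0))
        ↔ inDomA f)
    ∧ (∀ (f : L2) (h0 : inDomAstar f 0)
        (hΓ : Tendsto (fun R : ℝ => ∫ x in Set.Ioc (-R) R, f x) atTop (nhds 0))
        (hA : inDomA f),
        AtildeStarOp φ ψ f 0 h0 = Aop φ ψ f hA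
          ∧ AstarOp φ ψ f 0 h0 = AtildeOp φ ψ f hA)
    ∧ (∀ (f g : L2) (cf cg : ℂ) (hf : inDomAstar f cf) (hg : inDomAstar g cg),
        ∃ Γ1f Γ1g : ℂ,
          Tendsto (fun R : ℝ => ∫ x in Set.Ioc (-R) R, f x) atTop (nhds Γ1f) ∧
          Tendsto (fun R : ℝ => ∫ x in Set.Ioc (-R) R, g x) atTop (nhds Γ1g) ∧
          ⟪g, AstarOp φ ψ f cf hf⟫_ℂ - ⟪AtildeStarOp φ ψ g cg hg, f⟫_ℂ
            = Γ1f * (starRingEnd ℂ) cg - cf * (starRingEnd ℂ) Γ1g) := by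
  refine ⟨?_, ?_, ?_⟩
  · intro f
    constructor
    · rintro ⟨h1, h2⟩
      refine ⟨?_, h2⟩
      rw [inDomAstar, sub_zero_fun_eq] at h1
      exact h1
    · intro h
      exact ⟨by rw [inDomAstar, sub_zero_fun_eq]; exact h.1, h.2⟩
  · intro f h0 hΓ hA
    have htoLp : MemLp.toLp (fun x : ℝ => (x:ℂ) * f x - 0) h0
        = MemLp.toLp (fun x : ℝ => (x:ℂ) * f x) hA.1 :=
      MemLp.toLp_congr _ _ (Eventually.of_forall fun x => by simp)
    constructor
    · rw [AtildeStarOp, Aop, htoLp]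
    · rw [AstarOp, AtildeOp, htoLp]
  · intro f g cf cg hf hg
    obtain ⟨Γ1f, hFt⟩ := gamma1_exists (Lp.memLp f) hf
    obtain ⟨Γ1g, hGt⟩ := gamma1_exists (Lp.memLp g) hg
    exact ⟨Γ1f, Γ1g, hFt, hGt, green_identity φ ψ f g cf cg hf hg Γ1f Γ1g hFt hGt⟩
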